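/- arXiv:2206.00553 — 2 statements merged into one kernel-verified Lean document; each statement's English description precedes it below -/
import Mathlib

section
/- For real numbers l ≤ 0 ≤ u and a real z with l ≤ z ≤ u, the value ẑ = max(0, z) is the unique real satisfying: there exists δ ∈ {0,1} with ẑ ≥ 0, ẑ ≤ u·δ, ẑ ≥ z, and ẑ ≤ z − l·(1 − δ). -/
/-- For `l ≤ 0 ≤ u` and `l ≤ z ≤ u`, the value `ẑ = max 0 z` is the unique real
satisfying the big-M MILP ReLU encoding: there exists a binary `δ` with `ẑ ≥ 0`, `ẑ ≤ u·δ`,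
`ẑ ≥ z`, and `ẑ ≤ z − l·(1 − δ)`. -/
theorem relu_milp_encoding_exact
    (l u z : ℝ) (hl : l ≤ 0) (hu : 0 ≤ u) (hlz : l ≤ z) (hzu : z ≤ u) (zhat : ℝ) :
    (∃ δ : ℝ, (δ = 0 ∨ δ = 1) ∧ 0 ≤ zhat ∧ zhat ≤ u * δ ∧ z ≤ zhat ∧
      zhat ≤ z - l * (1 - δ))
    ↔ zhat = max 0 z := by
  constructor
  · rintro ⟨δ, (rfl | rfl), h0, h1, h2, h3⟩
    · simp only [mul_zero] at h1
      have hz : zhat = 0 := le_antisymm h1 h0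
      have : z ≤ 0 := hz ▸ h2
      simp [hz, max_eq_left this]
    · simp only [sub_self, mul_zero, sub_zero] at h3
      have : zhat = z := le_antisymm h3 h2
      simp [this, max_eq_right (this ▸ h0)]
  · rintro rfl
    rcases le_total z 0 with h | h
    · exact ⟨0, Or.inl rfl, le_max_left _ _, by simpa using h, le_max_right _ _,
        by rw [max_eq_left h]; norm_num; linarith⟩
    · exact ⟨1, Or.inr rfl, le_max_left _ _, by simp [max_eq_right h, hzu],
        le_max_right _ _, by simp [max_eq_right h]⟩
end

section
/- If z > 0 then any feasible (ẑ, δ) of the ReLU MILP encoding has δ = 1 and ẑ = z; if z < 0 then δ = 0 and ẑ = 0. -/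
/-- In the ReLU MILP encoding with bounds `l < 0 < u`, `l ≤ z ≤ u`: if `z > 0`
then any feasible `(ẑ, δ)` has `δ = 1` and `ẑ = z`; if `z < 0` then `δ = 0` and `ẑ = 0`. -/
theorem relu_milp_feasible_point_structure
    (l u z zhat δ : ℝ) (hl : l < 0) (hu : 0 < u) (hlz : l ≤ z) (hzu : z ≤ u)
    (hδ : δ = 0 ∨ δ = 1) (h1 : 0 ≤ zhat) (h2 : zhat ≤ u * δ) (h3 : z ≤ zhat)
    (h4 : zhat ≤ z - l * (1 - δ)) :
    (0 < z → δ = 1 ∧ zhat = z) ∧ (z < 0 → δ = 0 ∧ zhat = 0) := by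
  rcases hδ with h | h <;> subst h <;>
    constructor <;> intro hz <;> constructor <;> nlinarith
end
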